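/- Fix an integer n ≥ 1 and reals a1,a2,b1,b2,c1,c2,d1,d2,e,f,g,h satisfying e = −g, f = −h, a1+c1+n·(a2+c2) = 0 and b1+d1+n·(b2+d2) = 0, and let W be the associated restricted-form matrix. Then ‖W‖_* = (n−1)·√(M1) + √(2·M2), where M1 = a1²+b1²+c1²+d1²+2·|a1·d1−b1·c1| and M2 = (a1+n·a2)²+(b1+n·b2)²+n·e²+n·f². -/

import Mathlib

/-- The nuclear norm of a real matrix: the trace of the positive semidefinite
square root of `Wᵀ * W` (equivalently, the sum of the singular values of `W`). -/
noncomputable def nuclearNorm {m k : Type*} [Fintype m] [Fintype k] [DecidableEq k]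
    (W : Matrix m k ℝ) : ℝ :=
  (((Matrix.posSemidef_conjTranspose_mul_self W).1.eigenvectorUnitary : Matrix k k ℝ) *
    Matrix.diagonal (((↑) : ℝ → ℝ) ∘ (√·) ∘ (Matrix.posSemidef_conjTranspose_mul_self W).1.eigenvalues) *
    (star (Matrix.posSemidef_conjTranspose_mul_self W).1.eigenvectorUnitary : Matrix k k ℝ)).trace

/-- The restricted-form matrix in `ℝ^{(2n+2)×(2n)}`.  Rows are indexed by the input
tokens `a_1,…,a_n` (`Sum.inl i`), `b_1,…,b_n` (`Sum.inr (Sum.inl i)`) and the relation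
tokens `r_1, r_2` (`Sum.inr (Sum.inr k)`, `k = 0, 1`); columns by the output tokens
`b_1,…,b_n` (`Sum.inl j`) and `c_1,…,c_n` (`Sum.inr j`). -/
def restrictedW (n : ℕ) (a1 a2 b1 b2 c1 c2 d1 d2 e f g h : ℝ) :
    Matrix (Fin n ⊕ Fin n ⊕ Fin 2) (Fin n ⊕ Fin n) ℝ :=
  fun r y =>
    match r, y with
    | Sum.inl i, Sum.inl j => (if i = j then a1 else 0) + a2
    | Sum.inl i, Sum.inr j => (if i = j then c1 else 0) + c2
    | Sum.inr (Sum.inl i), Sum.inl j => (if i = j then b1 else 0) + b2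
    | Sum.inr (Sum.inl i), Sum.inr j => (if i = j then d1 else 0) + d2
    | Sum.inr (Sum.inr k), Sum.inl _ => if k = 0 then e else f
    | Sum.inr (Sum.inr k), Sum.inr _ => if k = 0 then g else h

/-- Candidate square root matrix. -/
def Smat (n : ℕ) (p11 p12 p22 u11 u12 u22 : ℝ) :
    Matrix (Fin n ⊕ Fin n) (Fin n ⊕ Fin n) ℝ :=
  fun r y =>
    match r, y with
    | Sum.inl i, Sum.inl j => (if i = j then p11 else 0) + u11
    | Sum.inl i, Sum.inr j => (if i = j then p12 else 0) + u12
    | Sum.inr i, Sum.inl j => (if i = j then p12 else 0) + u12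
    | Sum.inr i, Sum.inr j => (if i = j then p22 else 0) + u22

lemma convL (n : ℕ) (p q u v : ℝ) (i j : Fin n) :
    ∑ k : Fin n, ((if k = i then p else 0) + u) * ((if k = j then q else 0) + v)
    = (if i = j then p * q else 0) + (p * v + u * q + n * (u * v)) := by
  simp only [add_mul, mul_add, ite_mul, mul_ite, zero_mul, mul_zero, Finset.sum_add_distrib,
    Finset.sum_ite_eq', Finset.mem_univ, if_true, Finset.sum_const, Finset.card_univ,
    Fintype.card_fin, nsmul_eq_mul]
  rcases eq_or_ne i j with rfl | hij
  · simp; ring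
  · simp [hij, Ne.symm hij]; ring

lemma convR (n : ℕ) (p q u v : ℝ) (i j : Fin n) :
    ∑ k : Fin n, ((if i = k then p else 0) + u) * ((if k = j then q else 0) + v)
    = (if i = j then p * q else 0) + (p * v + u * q + n * (u * v)) := by
  simp only [add_mul, mul_add, ite_mul, mul_ite, zero_mul, mul_zero, Finset.sum_add_distrib,
    Finset.sum_ite_eq, Finset.sum_ite_eq', Finset.mem_univ, if_true, Finset.sum_const,
    Finset.card_univ, Fintype.card_fin, nsmul_eq_mul]
  rcases eq_or_ne i j with rfl | hij
  · simp; ring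
  · simp [hij, Ne.symm hij]; ring

lemma quad2 (p q r x y : ℝ) (hp : 0 ≤ p) (hr : 0 ≤ r) (hd : q ^ 2 ≤ p * r) :
    0 ≤ p * x ^ 2 + 2 * q * (x * y) + r * y ^ 2 := by
  rcases eq_or_lt_of_le hp with hp0 | hp0
  · have hq : q = 0 := by nlinarith [sq_nonneg q]
    rw [← hp0, hq]
    have := mul_nonneg hr (sq_nonneg y)
    nlinarith
  · nlinarith [sq_nonneg (p * x + q * y), mul_nonneg (sub_nonneg.2 hd) (sq_nonneg y)]

open scoped MatrixOrder in
set_option maxHeartbeats 1600000 in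
lemma key (n : ℕ) (hn : 1 ≤ n) (a1 a2 b1 b2 c1 c2 d1 d2 e f g h p11 p12 p22 m u11 u12 u22 : ℝ)
    (heg : e = -g) (hfh : f = -h)
    (hc : c1 + n * c2 = -(a1 + n * a2)) (hd : d1 + n * d2 = -(b1 + n * b2))
    (hp11 : 0 ≤ p11) (hp22 : 0 ≤ p22) (hdet : p12 ^ 2 ≤ p11 * p22) (hm : 0 ≤ m)
    (h11 : p11 ^ 2 + p12 ^ 2 = a1 ^ 2 + b1 ^ 2)
    (h12 : p11 * p12 + p12 * p22 = a1 * c1 + b1 * d1)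
    (h22 : p12 ^ 2 + p22 ^ 2 = c1 ^ 2 + d1 ^ 2)
    (hm2 : m ^ 2 = 2 * ((a1 + n * a2) ^ 2 + (b1 + n * b2) ^ 2 + n * e ^ 2 + n * f ^ 2))
    (E1 : (n : ℝ) * u11 = m / 2 - p11) (E2 : (n : ℝ) * u12 = -(m / 2) - p12)
    (E3 : (n : ℝ) * u22 = m / 2 - p22) :
    nuclearNorm (restrictedW n a1 a2 b1 b2 c1 c2 d1 d2 e f g h)
      = ((n : ℝ) - 1) * (p11 + p22) + m := by
  have hn0 : (n : ℝ) ≠ 0 := Nat.cast_ne_zero.2 (by omega)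
  set W := restrictedW n a1 a2 b1 b2 c1 c2 d1 d2 e f g h with hW
  set S := Smat n p11 p12 p22 u11 u12 u22 with hS
  -- S is symmetric
  have hherm : S.IsHermitian := by
    ext z w
    rcases z with i | i <;> rcases w with j | j <;>
      simp only [hS, Matrix.conjTranspose_apply, Smat, star_trivial] <;>
      simp [eq_comm]
  -- S * S = Wᴴ * W
  have hsq : S ^ 2 = W.conjTranspose * W := by
    rw [pow_two]
    ext z w
    rw [Matrix.mul_apply, Matrix.mul_apply]
    rcases z with i | i <;> rcases w with j | j <;>
      simp only [hS, hW, Smat, restrictedW, Matrix.conjTranspose_apply, star_trivial,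
        Fintype.sum_sum_type, Fin.sum_univ_two, convL, convR] <;> norm_num
    · rcases eq_or_ne i j with rfl | hij
      · simp only [eq_self_iff_true, if_true]
        rw [← mul_right_inj' hn0]
        linear_combination ((n : ℝ) * u11 + m / 2 + p11) * E1
          + ((n : ℝ) * u12 - m / 2 + p12) * E2 + ((n : ℝ) - 1) * h11 + (1 / 2) * hm2
      · simp only [hij, if_false]
        rw [← mul_right_inj' hn0]
        linear_combination ((n : ℝ) * u11 + m / 2 + p11) * E1
          + ((n : ℝ) * u12 - m / 2 + p12) * E2 + (-1 : ℝ) * h11 + (1 / 2) * hm2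
    · rcases eq_or_ne i j with rfl | hij
      · simp only [eq_self_iff_true, if_true]
        rw [← mul_right_inj' hn0]
        linear_combination (-(m / 2)) * E1 + ((n : ℝ) * u11 + p11 + m / 2) * E2
          + ((n : ℝ) * u12 + p12) * E3 + ((n : ℝ) - 1) * h12 + (-1 / 2) * hm2
          + (-(a1 + n * a2)) * hc + (-(b1 + n * b2)) * hd
          + (-(n : ℝ) * e) * heg + (-(n : ℝ) * f) * hfh
      · simp only [hij, if_false]
        rw [← mul_right_inj' hn0]
        linear_combination (-(m / 2)) * E1 + ((n : ℝ) * u11 + p11 + m / 2) * E2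
          + ((n : ℝ) * u12 + p12) * E3 + (-1 : ℝ) * h12 + (-1 / 2) * hm2
          + (-(a1 + n * a2)) * hc + (-(b1 + n * b2)) * hd
          + (-(n : ℝ) * e) * heg + (-(n : ℝ) * f) * hfh
    · rcases eq_or_ne i j with rfl | hij
      · simp only [eq_self_iff_true, if_true]
        rw [← mul_right_inj' hn0]
        linear_combination (-(m / 2)) * E1 + ((n : ℝ) * u11 + p11 + m / 2) * E2
          + ((n : ℝ) * u12 + p12) * E3 + ((n : ℝ) - 1) * h12 + (-1 / 2) * hm2
          + (-(a1 + n * a2)) * hc + (-(b1 + n * b2)) * hd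
          + (-(n : ℝ) * e) * heg + (-(n : ℝ) * f) * hfh
      · simp only [hij, if_false]
        rw [← mul_right_inj' hn0]
        linear_combination (-(m / 2)) * E1 + ((n : ℝ) * u11 + p11 + m / 2) * E2
          + ((n : ℝ) * u12 + p12) * E3 + (-1 : ℝ) * h12 + (-1 / 2) * hm2
          + (-(a1 + n * a2)) * hc + (-(b1 + n * b2)) * hd
          + (-(n : ℝ) * e) * heg + (-(n : ℝ) * f) * hfh
    · rcases eq_or_ne i j with rfl | hij
      · simp only [eq_self_iff_true, if_true]
        rw [← mul_right_inj' hn0]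
        linear_combination ((n : ℝ) * u12 + p12 - m / 2) * E2
          + ((n : ℝ) * u22 + p22 + m / 2) * E3 + ((n : ℝ) - 1) * h22 + (1 / 2) * hm2
          + ((a1 + n * a2) - (c1 + n * c2)) * hc + ((b1 + n * b2) - (d1 + n * d2)) * hd
          + ((n : ℝ) * (e - g)) * heg + ((n : ℝ) * (f - h)) * hfh
      · simp only [hij, if_false]
        rw [← mul_right_inj' hn0]
        linear_combination ((n : ℝ) * u12 + p12 - m / 2) * E2
          + ((n : ℝ) * u22 + p22 + m / 2) * E3 + (-1 : ℝ) * h22 + (1 / 2) * hm2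
          + ((a1 + n * a2) - (c1 + n * c2)) * hc + ((b1 + n * b2) - (d1 + n * d2)) * hd
          + ((n : ℝ) * (e - g)) * heg + ((n : ℝ) * (f - h)) * hfh
  -- S is positive semidefinite
  have hpsd : S.PosSemidef := by
    refine Matrix.PosSemidef.of_dotProduct_mulVec_nonneg hherm fun x => ?_
    have hmv1 : ∀ i : Fin n, S.mulVec x (Sum.inl i)
        = p11 * x (Sum.inl i) + p12 * x (Sum.inr i)
          + (u11 * (∑ k, x (Sum.inl k)) + u12 * (∑ k, x (Sum.inr k))) := by
      intro i
      simp only [hS, Matrix.mulVec, dotProduct, Fintype.sum_sum_type, Smat, add_mul,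
        ite_mul, zero_mul, Finset.sum_add_distrib, Finset.sum_ite_eq, Finset.mem_univ,
        if_true, ← Finset.mul_sum]
      ring
    have hmv2 : ∀ i : Fin n, S.mulVec x (Sum.inr i)
        = p12 * x (Sum.inl i) + p22 * x (Sum.inr i)
          + (u12 * (∑ k, x (Sum.inl k)) + u22 * (∑ k, x (Sum.inr k))) := by
      intro i
      simp only [hS, Matrix.mulVec, dotProduct, Fintype.sum_sum_type, Smat, add_mul,
        ite_mul, zero_mul, Finset.sum_add_distrib, Finset.sum_ite_eq, Finset.mem_univ,
        if_true, ← Finset.mul_sum]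
      ring
    have hdot : dotProduct (star x) (S.mulVec x)
        = p11 * (∑ i, x (Sum.inl i) ^ 2) + 2 * p12 * (∑ i, x (Sum.inl i) * x (Sum.inr i))
          + p22 * (∑ i, x (Sum.inr i) ^ 2)
          + (u11 * (∑ i, x (Sum.inl i)) ^ 2
            + 2 * u12 * ((∑ i, x (Sum.inl i)) * (∑ i, x (Sum.inr i)))
            + u22 * (∑ i, x (Sum.inr i)) ^ 2) := by
      simp only [dotProduct, Pi.star_apply, star_trivial, Fintype.sum_sum_type,
        hmv1, hmv2]
      rw [Finset.sum_congr rfl (fun i _ => show x (Sum.inl i) * (p11 * x (Sum.inl i)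
          + p12 * x (Sum.inr i) + (u11 * (∑ k, x (Sum.inl k)) + u12 * (∑ k, x (Sum.inr k))))
        = p11 * x (Sum.inl i) ^ 2 + p12 * (x (Sum.inl i) * x (Sum.inr i))
          + (u11 * (∑ k, x (Sum.inl k)) + u12 * (∑ k, x (Sum.inr k))) * x (Sum.inl i)
        from by ring)]
      rw [Finset.sum_congr rfl (fun i _ => show x (Sum.inr i) * (p12 * x (Sum.inl i)
          + p22 * x (Sum.inr i) + (u12 * (∑ k, x (Sum.inl k)) + u22 * (∑ k, x (Sum.inr k))))
        = p22 * x (Sum.inr i) ^ 2 + p12 * (x (Sum.inl i) * x (Sum.inr i))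
          + (u12 * (∑ k, x (Sum.inl k)) + u22 * (∑ k, x (Sum.inr k))) * x (Sum.inr i)
        from by ring)]
      simp only [Finset.sum_add_distrib, ← Finset.mul_sum]
      ring
    rw [hdot]
    have hsum : ∑ i : Fin n, (p11 * ((n : ℝ) * x (Sum.inl i) - ∑ k, x (Sum.inl k)) ^ 2
          + 2 * p12 * (((n : ℝ) * x (Sum.inl i) - ∑ k, x (Sum.inl k))
            * ((n : ℝ) * x (Sum.inr i) - ∑ k, x (Sum.inr k)))
          + p22 * ((n : ℝ) * x (Sum.inr i) - ∑ k, x (Sum.inr k)) ^ 2)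
        = (n : ℝ) ^ 2 * (p11 * (∑ i, x (Sum.inl i) ^ 2)
            + 2 * p12 * (∑ i, x (Sum.inl i) * x (Sum.inr i))
            + p22 * (∑ i, x (Sum.inr i) ^ 2))
          - (n : ℝ) * (p11 * (∑ i, x (Sum.inl i)) ^ 2
            + 2 * p12 * ((∑ i, x (Sum.inl i)) * (∑ i, x (Sum.inr i)))
            + p22 * (∑ i, x (Sum.inr i)) ^ 2) := by
      rw [Finset.sum_congr rfl (fun i _ => show (p11 * ((n : ℝ) * x (Sum.inl i)
            - ∑ k, x (Sum.inl k)) ^ 2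
          + 2 * p12 * (((n : ℝ) * x (Sum.inl i) - ∑ k, x (Sum.inl k))
            * ((n : ℝ) * x (Sum.inr i) - ∑ k, x (Sum.inr k)))
          + p22 * ((n : ℝ) * x (Sum.inr i) - ∑ k, x (Sum.inr k)) ^ 2)
        = ((n : ℝ) ^ 2 * p11) * x (Sum.inl i) ^ 2
          + ((n : ℝ) ^ 2 * (2 * p12)) * (x (Sum.inl i) * x (Sum.inr i))
          + ((n : ℝ) ^ 2 * p22) * x (Sum.inr i) ^ 2
          + (-2 * (n : ℝ) * (p11 * (∑ k, x (Sum.inl k)) + p12 * (∑ k, x (Sum.inr k))))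
            * x (Sum.inl i)
          + (-2 * (n : ℝ) * (p12 * (∑ k, x (Sum.inl k)) + p22 * (∑ k, x (Sum.inr k))))
            * x (Sum.inr i)
          + (p11 * (∑ k, x (Sum.inl k)) ^ 2
            + 2 * p12 * ((∑ k, x (Sum.inl k)) * (∑ k, x (Sum.inr k)))
            + p22 * (∑ k, x (Sum.inr k)) ^ 2) from by ring)]
      simp only [Finset.sum_add_distrib, ← Finset.mul_sum, Finset.sum_const,
        Finset.card_univ, Fintype.card_fin, nsmul_eq_mul]
      ring
    have hpos1 : 0 ≤ ∑ i : Fin n, (p11 * ((n : ℝ) * x (Sum.inl i) - ∑ k, x (Sum.inl k)) ^ 2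
          + 2 * p12 * (((n : ℝ) * x (Sum.inl i) - ∑ k, x (Sum.inl k))
            * ((n : ℝ) * x (Sum.inr i) - ∑ k, x (Sum.inr k)))
          + p22 * ((n : ℝ) * x (Sum.inr i) - ∑ k, x (Sum.inr k)) ^ 2) :=
      Finset.sum_nonneg fun i _ => quad2 _ _ _ _ _ hp11 hp22 hdet
    have hpos2 : 0 ≤ (n : ℝ) * (m / 2)
        * ((∑ i, x (Sum.inl i)) - (∑ i, x (Sum.inr i))) ^ 2 := by positivity
    have hNT : (n : ℝ) ^ 2 * (p11 * (∑ i, x (Sum.inl i) ^ 2)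
          + 2 * p12 * (∑ i, x (Sum.inl i) * x (Sum.inr i))
          + p22 * (∑ i, x (Sum.inr i) ^ 2)
          + (u11 * (∑ i, x (Sum.inl i)) ^ 2
            + 2 * u12 * ((∑ i, x (Sum.inl i)) * (∑ i, x (Sum.inr i)))
            + u22 * (∑ i, x (Sum.inr i)) ^ 2))
        = (∑ i : Fin n, (p11 * ((n : ℝ) * x (Sum.inl i) - ∑ k, x (Sum.inl k)) ^ 2
            + 2 * p12 * (((n : ℝ) * x (Sum.inl i) - ∑ k, x (Sum.inl k))
              * ((n : ℝ) * x (Sum.inr i) - ∑ k, x (Sum.inr k)))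
            + p22 * ((n : ℝ) * x (Sum.inr i) - ∑ k, x (Sum.inr k)) ^ 2))
          + (n : ℝ) * (m / 2) * ((∑ i, x (Sum.inl i)) - (∑ i, x (Sum.inr i))) ^ 2 := by
      linear_combination (-1 : ℝ) * hsum
        + ((n : ℝ) * (∑ i, x (Sum.inl i)) ^ 2) * E1
        + (2 * (n : ℝ) * ((∑ i, x (Sum.inl i)) * (∑ i, x (Sum.inr i)))) * E2
        + ((n : ℝ) * (∑ i, x (Sum.inr i)) ^ 2) * E3
    have hN2 : (0 : ℝ) < (n : ℝ) ^ 2 := by positivity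
    have hbig : 0 ≤ (n : ℝ) ^ 2 * (p11 * (∑ i, x (Sum.inl i) ^ 2)
          + 2 * p12 * (∑ i, x (Sum.inl i) * x (Sum.inr i))
          + p22 * (∑ i, x (Sum.inr i) ^ 2)
          + (u11 * (∑ i, x (Sum.inl i)) ^ 2
            + 2 * u12 * ((∑ i, x (Sum.inl i)) * (∑ i, x (Sum.inr i)))
            + u22 * (∑ i, x (Sum.inr i)) ^ 2)) := by
      rw [hNT]; exact add_nonneg hpos1 hpos2
    nlinarith [hbig, hN2]
  -- identify the sqrt and compute the trace
  have hid : S = (((Matrix.posSemidef_conjTranspose_mul_self W).1.eigenvectorUnitary :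
      Matrix (Fin n ⊕ Fin n) (Fin n ⊕ Fin n) ℝ) *
      Matrix.diagonal (((↑) : ℝ → ℝ) ∘ (√·) ∘ (Matrix.posSemidef_conjTranspose_mul_self W).1.eigenvalues) *
      (star (Matrix.posSemidef_conjTranspose_mul_self W).1.eigenvectorUnitary :
        Matrix (Fin n ⊕ Fin n) (Fin n ⊕ Fin n) ℝ)) := by
    have h1 := CFC.sqrt_unique (a := W.conjTranspose * W) (b := S)
      (by rw [← pow_two]; exact hsq) hpsd.nonneg
    rw [CFC.sqrt_eq_real_sqrt _ (Matrix.posSemidef_conjTranspose_mul_self W).nonneg,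
      cfcₙ_eq_cfc (hf0 := Real.sqrt_zero), (Matrix.posSemidef_conjTranspose_mul_self W).1.cfc_eq] at h1
    rw [← h1]
    simp [Matrix.IsHermitian.cfc, Unitary.conjStarAlgAut_apply, Function.comp_def]
  rw [nuclearNorm, ← hid]
  rw [Matrix.trace]
  simp only [hS, Matrix.diag, Smat, Fintype.sum_sum_type, eq_self_iff_true, if_true,
    Finset.sum_const, Finset.card_univ, Fintype.card_fin, nsmul_eq_mul]
  linear_combination E1 + E3

set_option maxHeartbeats 1600000 in
/-- Under the symmetry constraints, the nuclear norm of the restricted-form matrix is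
`(n−1)·√M1 + √(2·M2)` with `M1 = a1²+b1²+c1²+d1²+2·|a1·d1−b1·c1|` and
`M2 = (a1+n·a2)²+(b1+n·b2)²+n·e²+n·f²`. -/
theorem nuclearNorm_restrictedW_symmetric (n : ℕ) (hn : 1 ≤ n)
    (a1 a2 b1 b2 c1 c2 d1 d2 e f g h : ℝ)
    (heg : e = -g) (hfh : f = -h)
    (hac : a1 + c1 + n * (a2 + c2) = 0) (hbd : b1 + d1 + n * (b2 + d2) = 0) :
    nuclearNorm (restrictedW n a1 a2 b1 b2 c1 c2 d1 d2 e f g h) =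
      ((n : ℝ) - 1) * Real.sqrt (a1 ^ 2 + b1 ^ 2 + c1 ^ 2 + d1 ^ 2
          + 2 * |a1 * d1 - b1 * c1|) +
        Real.sqrt (2 * ((a1 + n * a2) ^ 2 + (b1 + n * b2) ^ 2
          + n * e ^ 2 + n * f ^ 2)) := by
  have hn0 : (n : ℝ) ≠ 0 := Nat.cast_ne_zero.2 (by omega)
  have hc : c1 + n * c2 = -(a1 + n * a2) := by linear_combination hac
  have hd : d1 + n * d2 = -(b1 + n * b2) := by linear_combination hbd
  set M1 : ℝ := a1 ^ 2 + b1 ^ 2 + c1 ^ 2 + d1 ^ 2 + 2 * |a1 * d1 - b1 * c1| with hM1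
  have hM1nn : 0 ≤ M1 := by positivity
  set m : ℝ := Real.sqrt (2 * ((a1 + n * a2) ^ 2 + (b1 + n * b2) ^ 2
      + n * e ^ 2 + n * f ^ 2)) with hmdef
  have hm : 0 ≤ m := Real.sqrt_nonneg _
  have hm2 : m ^ 2 = 2 * ((a1 + n * a2) ^ 2 + (b1 + n * b2) ^ 2
      + n * e ^ 2 + n * f ^ 2) := Real.sq_sqrt (by positivity)
  have hD : (0 : ℝ) ≤ |a1 * d1 - b1 * c1| := abs_nonneg _
  have hD2 : |a1 * d1 - b1 * c1| ^ 2 = (a1 * d1 - b1 * c1) ^ 2 := sq_abs _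
  rcases eq_or_ne M1 0 with hM0 | hM0
  · -- degenerate case : a1 = b1 = c1 = d1 = 0
    have hexp : a1 ^ 2 + b1 ^ 2 + c1 ^ 2 + d1 ^ 2 + 2 * |a1 * d1 - b1 * c1| = 0 := by
      rw [← hM1]; exact hM0
    have ha1 : a1 = 0 := sq_eq_zero_iff.mp (by
      nlinarith [hexp, sq_nonneg b1, sq_nonneg c1, sq_nonneg d1, hD, sq_nonneg a1])
    have hb1 : b1 = 0 := sq_eq_zero_iff.mp (by
      nlinarith [hexp, sq_nonneg a1, sq_nonneg c1, sq_nonneg d1, hD, sq_nonneg b1])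
    have hc1 : c1 = 0 := sq_eq_zero_iff.mp (by
      nlinarith [hexp, sq_nonneg a1, sq_nonneg b1, sq_nonneg d1, hD, sq_nonneg c1])
    have hd1 : d1 = 0 := sq_eq_zero_iff.mp (by
      nlinarith [hexp, sq_nonneg a1, sq_nonneg b1, sq_nonneg c1, hD, sq_nonneg d1])
    have hres := key n hn a1 a2 b1 b2 c1 c2 d1 d2 e f g h 0 0 0 m
      ((m / 2 - 0) / n) ((-(m / 2) - 0) / n) ((m / 2 - 0) / n)
      heg hfh hc hd le_rfl le_rfl (by norm_num) hm
      (by rw [ha1, hb1] <;> ring) (by rw [ha1, hb1, hc1, hd1] <;> ring)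
      (by rw [hc1, hd1] <;> ring) hm2
      (by field_simp <;> ring) (by field_simp <;> ring) (by field_simp <;> ring)
    rw [hres, hM0, Real.sqrt_zero]
    ring
  · have hM1pos : 0 < M1 := lt_of_le_of_ne hM1nn (Ne.symm hM0)
    set s : ℝ := Real.sqrt M1 with hsdef
    have hs0 : s ≠ 0 := by
      rw [hsdef]
      exact ne_of_gt (Real.sqrt_pos.2 hM1pos)
    have hs2 : s ^ 2 = M1 := Real.sq_sqrt hM1nn
    set D : ℝ := |a1 * d1 - b1 * c1| with hDdef
    set p11 : ℝ := (a1 ^ 2 + b1 ^ 2 + D) / s with hp11def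
    set p12 : ℝ := (a1 * c1 + b1 * d1) / s with hp12def
    set p22 : ℝ := (c1 ^ 2 + d1 ^ 2 + D) / s with hp22def
    have hsnn : 0 ≤ s := Real.sqrt_nonneg _
    have hp11 : 0 ≤ p11 := div_nonneg (by positivity) hsnn
    have hp22 : 0 ≤ p22 := div_nonneg (by positivity) hsnn
    have hnum : (a1 * c1 + b1 * d1) ^ 2 ≤ (a1 ^ 2 + b1 ^ 2 + D) * (c1 ^ 2 + d1 ^ 2 + D) := by
      nlinarith [hD2, hD, mul_nonneg hD (show (0:ℝ) ≤ a1 ^ 2 + b1 ^ 2 + c1 ^ 2 + d1 ^ 2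
        from by positivity)]
    have hdet : p12 ^ 2 ≤ p11 * p22 := by
      have e1 : p12 ^ 2 = (a1 * c1 + b1 * d1) ^ 2 / s ^ 2 := by rw [hp12def, div_pow]
      have e2 : p11 * p22 = (a1 ^ 2 + b1 ^ 2 + D) * (c1 ^ 2 + d1 ^ 2 + D) / s ^ 2 := by
        rw [hp11def, hp22def, div_mul_div_comm, ← pow_two]
      rw [e1, e2]
      gcongr
    have hs2' : s ^ 2 = a1 ^ 2 + b1 ^ 2 + c1 ^ 2 + d1 ^ 2 + 2 * D := hs2.trans hM1
    have h11 : p11 ^ 2 + p12 ^ 2 = a1 ^ 2 + b1 ^ 2 := by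
      rw [hp11def, hp12def, div_pow, div_pow, ← add_div,
        div_eq_iff (pow_ne_zero 2 hs0)]
      linear_combination (-(a1 ^ 2 + b1 ^ 2)) * hs2' + hD2
    have h12 : p11 * p12 + p12 * p22 = a1 * c1 + b1 * d1 := by
      rw [hp11def, hp12def, hp22def, div_mul_div_comm, div_mul_div_comm, ← add_div,
        div_eq_iff (by rw [← pow_two]; exact pow_ne_zero 2 hs0)]
      linear_combination (-(a1 * c1 + b1 * d1)) * hs2'
    have h22 : p12 ^ 2 + p22 ^ 2 = c1 ^ 2 + d1 ^ 2 := by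
      rw [hp12def, hp22def, div_pow, div_pow, ← add_div,
        div_eq_iff (pow_ne_zero 2 hs0)]
      linear_combination (-(c1 ^ 2 + d1 ^ 2)) * hs2' + hD2
    have hres := key n hn a1 a2 b1 b2 c1 c2 d1 d2 e f g h p11 p12 p22 m
      ((m / 2 - p11) / n) ((-(m / 2) - p12) / n) ((m / 2 - p22) / n)
      heg hfh hc hd hp11 hp22 hdet hm h11 h12 h22 hm2
      (by field_simp <;> ring) (by field_simp <;> ring) (by field_simp <;> ring)
    rw [hres]
    have hps : p11 + p22 = s := by
      rw [hp11def, hp22def, ← add_div,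
        show a1 ^ 2 + b1 ^ 2 + D + (c1 ^ 2 + d1 ^ 2 + D) = M1 from by rw [hM1]; ring,
        hsdef]
      exact Real.div_sqrt
    rw [hps]
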